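/- Let (Ω,μ) be a measure space and let p ∈ ℝ with p ≥ 3. Let (u_n) be a sequence in L^p(Ω,μ) and u ∈ L^p(Ω,μ). Assume that u_n converges weakly to u in L^p(Ω,μ) (i.e. ∫_Ω u_n v dμ → ∫_Ω u v dμ for every v ∈ L^{p'}(Ω,μ), where 1/p + 1/p' = 1) and that u is a polar limit of (u_n) with respect to the L^p norm metric. Then ∫_Ω |u_n|^p dμ ≥ ∫_Ω |u|^p dμ + ∫_Ω |u_n − u|^p dμ + o(1) as n → ∞, i.e. liminf_n ( ∫_Ω |u_n|^p dμ − ∫_Ω |u|^p dμ − ∫_Ω |u_n − u|^p dμ ) ≥ 0. -/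

import Mathlib

open Filter Metric ENNReal MeasureTheory

noncomputable section

variable {E : Type*} [MetricSpace E]

/-- A sequence `x` Δ-converges to `p`: for every subsequence and every `y`,
`limsup d(x_{k_n}, p) ≤ limsup d(x_{k_n}, y)`. -/
def DeltaConv (x : ℕ → E) (p : E) : Prop :=
  ∀ k : ℕ → ℕ, StrictMono k → ∀ y : E,
    Filter.limsup (fun n => edist (x (k n)) p) Filter.atTop ≤
      Filter.limsup (fun n => edist (x (k n)) y) Filter.atTop

/-- A sequence `x` strong-Δ converges to `p`: `lim d(x_n,p)` exists and for every `y`,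
`lim d(x_n,p) ≤ liminf d(x_n,y)`. -/
def StrongDeltaConv (x : ℕ → E) (p : E) : Prop :=
  ∃ r : ℝ, Filter.Tendsto (fun n => dist (x n) p) Filter.atTop (nhds r) ∧
    ∀ y : E, r ≤ Filter.liminf (fun n => dist (x n) y) Filter.atTop

/-- `p` is a polar limit of the sequence `x`: for every `y ≠ p`, eventually
`d(x_n,p) < d(x_n,y)`. -/
def PolarLim (x : ℕ → E) (p : E) : Prop :=
  ∀ y : E, y ≠ p → ∃ M : ℕ, ∀ n ≥ M, dist (x n) p < dist (x n) y

/-- `c` is an asymptotic center of the sequence `x`: it minimizes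
`I(y) = limsup d(x_n, y)`. -/
def AsympCenter (x : ℕ → E) (c : E) : Prop :=
  ∀ y : E, Filter.limsup (fun n => dist (x n) c) Filter.atTop ≤
    Filter.limsup (fun n => dist (x n) y) Filter.atTop

/-- A metric space is Δ-complete if every bounded sequence admits an asymptotic center. -/
def DeltaComplete (E : Type*) [MetricSpace E] : Prop :=
  ∀ x : ℕ → E, Bornology.IsBounded (Set.range x) → ∃ c : E, AsympCenter x c

/-- The Chebyshev radius of a set `X`: `inf_z sup_{w ∈ X} d(z,w)`. -/
def chebyshevRadius (X : Set E) : ℝ≥0∞ :=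
  ⨅ z : E, ⨆ w ∈ X, edist z w

/-- A metric space is a uniform SR (Staples rotund) space if there is
`δ : (0,∞)² → (0,∞)` such that for all `r, d̄ > 0` and all `x, y` with `d(x,y) ≥ d̄`,
the Chebyshev radius of `B_{r+δ}(x) ∩ B_{r+δ}(y)` is at most `r − δ`. -/
def IsUniformSR (E : Type*) [MetricSpace E] : Prop :=
  ∃ δ : ℝ → ℝ → ℝ,
    (∀ r dbar : ℝ, 0 < r → 0 < dbar → 0 < δ r dbar) ∧
    ∀ r dbar : ℝ, 0 < r → 0 < dbar → ∀ x y : E, dbar ≤ dist x y →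
      chebyshevRadius
          (Metric.closedBall x (r + δ r dbar) ∩ Metric.closedBall y (r + δ r dbar)) ≤
        ENNReal.ofReal (r - δ r dbar)

section Stmt19Helpers
open Real Set

namespace Stmt19

variable {p : ℝ}





lemma rpow_add_eq {z a b c : ℝ} (hz : 0 < z) (h : a + b = c) :
    z ^ a * z ^ b = z ^ c := by rw [← Real.rpow_add hz, h]

lemma rpow_pm1_mul {z : ℝ} (hz : 0 < z) (p : ℝ) : z ^ (p-1) * z = z ^ p := by
  have := rpow_add_eq hz (show (p-1) + 1 = p by ring)
  rwa [Real.rpow_one] at this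


lemma pm1_eq (hp : 3 ≤ p) {z : ℝ} (hz : 0 ≤ z) : z ^ (p-2) * z = z ^ (p-1) := by
  rcases eq_or_lt_of_le hz with h | h
  · rw [← h, Real.zero_rpow (by norm_num; linarith), Real.zero_rpow (by norm_num; linarith)]
    ring
  · have := rpow_add_eq h (show (p-2) + 1 = p - 1 by ring)
    rwa [Real.rpow_one] at this

lemma pm2_sq_eq (hp : 3 ≤ p) {z : ℝ} (hz : 0 ≤ z) : z ^ (p-2) * z ^ 2 = z ^ p := by
  rcases eq_or_lt_of_le hz with h | h
  · rw [← h, Real.zero_rpow (by norm_num; linarith), Real.zero_rpow (by linarith)]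
    ring
  · rw [show (z:ℝ) ^ (2:ℕ) = z ^ (2:ℝ) by rw [← Real.rpow_natCast z 2]; norm_num,
      ← Real.rpow_add h]
    norm_num

lemma lemA {s r : ℝ} (hs : 0 < s) (hs1 : s ≤ 1) (hr : 0 ≤ r) :
    s ^ r * (1 + r * (1 - s)) ≤ 1 := by
  have h1 : s ^ r = Real.exp (Real.log s * r) := Real.rpow_def_of_pos hs r
  have h2 : 1 + r * (1 - s) ≤ Real.exp (r * (1 - s)) := by
    have := Real.add_one_le_exp (r * (1 - s)); linarith
  have h3 : Real.log s ≤ s - 1 := Real.log_le_sub_one_of_pos hs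
  have h4 : (0:ℝ) ≤ 1 + r * (1 - s) := by nlinarith
  calc s ^ r * (1 + r * (1 - s)) ≤ Real.exp (Real.log s * r) * Real.exp (r * (1 - s)) := by
        rw [h1]; exact mul_le_mul_of_nonneg_left h2 (Real.exp_pos _).le
    _ = Real.exp (Real.log s * r + r * (1 - s)) := (Real.exp_add _ _).symm
    _ ≤ Real.exp 0 := by
        apply Real.exp_le_exp.2
        nlinarith
    _ = 1 := Real.exp_zero

lemma lemB (hp : 3 ≤ p) {s : ℝ} (hs : 0 ≤ s) (hs1 : s ≤ 1) :
    s ^ (p-1) * (p - (p-1) * s) ≤ s ^ 2 * (3 - 2*s) := by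
  rcases eq_or_lt_of_le hs with h | h
  · rw [← h, Real.zero_rpow (by linarith)]; norm_num
  · have h1 : s ^ (p-1) = s ^ (2:ℕ) * s ^ (p-3) := by
      rw [show (s:ℝ) ^ (2:ℕ) = s ^ (2:ℝ) by rw [← Real.rpow_natCast s 2]; norm_num,
        ← Real.rpow_add h, show (2:ℝ) + (p-3) = p - 1 by ring]
    have hA := lemA h hs1 (by linarith : (0:ℝ) ≤ p - 3)
    have hs3 : s ^ (p-3) ≤ 1 := Real.rpow_le_one hs hs1 (by linarith)
    have hs3n : 0 ≤ s ^ (p-3) := Real.rpow_nonneg hs _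
    have key : s ^ (p-3) * (p - (p-1) * s) ≤ 3 - 2*s := by
      have e : p - (p-1)*s = (1 + (p-3)*(1-s)) + 2*(1-s) := by ring
      rw [e, mul_add]
      have h5 : s ^ (p-3) * (2*(1-s)) ≤ 2*(1-s) := by nlinarith
      linarith
    calc s ^ (p-1) * (p - (p-1)*s) = s ^ (2:ℕ) * (s ^ (p-3) * (p - (p-1)*s)) := by
          rw [h1]; ring
      _ ≤ s ^ (2:ℕ) * (3 - 2*s) := by
          apply mul_le_mul_of_nonneg_left key (by positivity)

lemma lemC (hp : 3 ≤ p) {x y : ℝ} (hx : 0 ≤ x) (hy : 0 ≤ y) :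
    x ^ p + y ^ p + p * x ^ (p-1) * y + p * y ^ (p-1) * x ≤ (x + y) ^ p := by
  rcases eq_or_lt_of_le (add_nonneg hx hy) with h | hc
  · have hx0 : x = 0 := by linarith
    have hy0 : y = 0 := by linarith
    subst hx0; subst hy0
    simp [Real.zero_rpow (by linarith : p ≠ 0)]
  · set c := x + y with hc_def
    set s := x / c with hs_def
    set t := y / c with ht_def
    have hs0 : 0 ≤ s := div_nonneg hx hc.le
    have ht0 : 0 ≤ t := div_nonneg hy hc.le
    have hst : s + t = 1 := by
      rw [hs_def, ht_def, ← add_div, div_self (ne_of_gt hc)]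
    have hs1 : s ≤ 1 := by linarith
    have ht1 : t ≤ 1 := by linarith
    have hc0 : c ≠ 0 := ne_of_gt hc
    have hxe : x = c * s := by rw [hs_def]; field_simp
    have hye : y = c * t := by rw [ht_def]; field_simp
    -- sub-claim for each half
    have half : ∀ a b : ℝ, 0 ≤ a → a ≤ 1 → b = 1 - a →
        a ^ p + p * a ^ (p-1) * b ≤ a ^ (2:ℕ) * (3 - 2*a) := by
      intro a b ha ha1 hb
      rcases eq_or_lt_of_le ha with h0 | h0
      · rw [← h0, Real.zero_rpow (by linarith), Real.zero_rpow (by linarith)]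
        norm_num
      · have hap : a ^ p = a ^ (p-1) * a := by
          rw [show p = (p-1) + 1 by ring, Real.rpow_add h0, Real.rpow_one]
          ring_nf
        have := lemB hp ha ha1
        subst hb
        calc a ^ p + p * a ^ (p-1) * (1-a) = a ^ (p-1) * (p - (p-1)*a) := by
              rw [hap]; ring
          _ ≤ a ^ (2:ℕ) * (3 - 2*a) := this
    have key : s ^ p + t ^ p + p * s ^ (p-1) * t + p * t ^ (p-1) * s ≤ 1 := by
      have h1 := half s t hs0 hs1 (by linarith)
      have h2 := half t s ht0 ht1 (by linarith)
      have hid : s ^ (2:ℕ) * (3 - 2*s) + t ^ (2:ℕ) * (3 - 2*t) = 1 := by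
        have ht' : t = 1 - s := by linarith
        rw [ht']; ring
      linarith
    have hcp : (0:ℝ) ≤ c ^ p := Real.rpow_nonneg hc.le _
    have e1 : x ^ p = c ^ p * s ^ p := by rw [hxe, Real.mul_rpow hc.le hs0]
    have e2 : y ^ p = c ^ p * t ^ p := by rw [hye, Real.mul_rpow hc.le ht0]
    have ecp : c ^ (p-1) * c = c ^ p := rpow_pm1_mul hc p
    have e3 : x ^ (p-1) * y = c ^ p * (s ^ (p-1) * t) := by
      rw [hxe, hye, Real.mul_rpow hc.le hs0, ← ecp]; ring
    have e4 : y ^ (p-1) * x = c ^ p * (t ^ (p-1) * s) := by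
      rw [hxe, hye, Real.mul_rpow hc.le ht0, ← ecp]; ring
    calc x ^ p + y ^ p + p * x ^ (p-1) * y + p * y ^ (p-1) * x
        = c ^ p * (s ^ p + t ^ p + p * s ^ (p-1) * t + p * t ^ (p-1) * s) := by
          rw [e1, e2]; linear_combination p * e3 + p * e4
      _ ≤ c ^ p * 1 := mul_le_mul_of_nonneg_left key hcp
      _ = (x + y) ^ p := by rw [mul_one]

lemma lemD (hp : 3 ≤ p) {x y : ℝ} (hy : 0 ≤ y) (hyx : y ≤ x) :
    x ^ p + y ^ p ≤ (x - y) ^ p + p * x ^ (p-1) * y + p * y ^ (p-1) * x := by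
  have hx : 0 ≤ x := le_trans hy hyx
  rcases eq_or_lt_of_le hx with h0 | h0
  · have hx0 : x = 0 := h0.symm
    have hy0 : y = 0 := le_antisymm (by linarith) hy
    subst hx0; subst hy0
    simp [Real.zero_rpow (by linarith : p ≠ 0)]
  · set s := y / x with hs_def
    have hs0 : 0 ≤ s := div_nonneg hy h0.le
    have hs1 : s ≤ 1 := by rw [hs_def, div_le_one h0]; exact hyx
    have hye : y = x * s := by rw [hs_def]; field_simp
    have key : 1 + s ^ p ≤ (1 - s) ^ p + p * s + p * s ^ (p-1) := by
      have bern : 1 + p * (-s) ≤ (1 + (-s)) ^ p :=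
        one_add_mul_self_le_rpow_one_add (by linarith) (by linarith)
      have h1 : (1:ℝ) - s = 1 + (-s) := by ring
      have hsp : s ^ p ≤ s ^ (p-1) := by
        rcases eq_or_lt_of_le hs0 with h2 | h2
        · rw [← h2, Real.zero_rpow (by linarith), Real.zero_rpow (by linarith)]
        · exact Real.rpow_le_rpow_of_exponent_ge h2 hs1 (by linarith)
      have hsn : 0 ≤ s ^ (p-1) := Real.rpow_nonneg hs0 _
      have : s ^ (p-1) ≤ p * s ^ (p-1) := by nlinarith
      rw [h1]
      linarith
    have hxp : (0:ℝ) ≤ x ^ p := Real.rpow_nonneg hx _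
    have e1 : y ^ p = x ^ p * s ^ p := by rw [hye, Real.mul_rpow h0.le hs0]
    have exp1 : x ^ (p-1) * x = x ^ p := rpow_pm1_mul h0 p
    have e2 : (x - y) ^ p = x ^ p * (1 - s) ^ p := by
      rw [show x - y = x * (1 - s) by rw [hye]; ring,
        Real.mul_rpow h0.le (by linarith)]
    have e3 : x ^ (p-1) * y = x ^ p * s := by rw [hye, ← exp1]; ring
    have e4 : y ^ (p-1) * x = x ^ p * s ^ (p-1) := by
      rw [hye, Real.mul_rpow h0.le hs0, ← exp1]; ring
    have := mul_le_mul_of_nonneg_left key hxp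
    calc x ^ p + y ^ p = x ^ p * (1 + s ^ p) := by rw [e1]; ring
      _ ≤ x ^ p * ((1 - s) ^ p + p * s + p * s ^ (p-1)) := this
      _ = (x - y) ^ p + p * x ^ (p-1) * y + p * y ^ (p-1) * x := by
          rw [e2]; linear_combination (-p) * e3 + (-p) * e4

/-- Key pointwise lower inequality P1. -/
lemma P1 (hp : 3 ≤ p) (x y : ℝ) :
    |x| ^ p + |y| ^ p + p * |x| ^ (p-2) * x * y + p * |y| ^ (p-2) * y * x
      ≤ |x + y| ^ p := by
  -- reduce to x ≥ 0
  have main : ∀ x y : ℝ, 0 ≤ x →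
      |x| ^ p + |y| ^ p + p * |x| ^ (p-2) * x * y + p * |y| ^ (p-2) * y * x
        ≤ |x + y| ^ p := by
    intro x y hx
    rcases le_or_gt 0 y with hy | hy
    · rw [abs_of_nonneg hx, abs_of_nonneg hy, abs_of_nonneg (by linarith)]
      have e1 : p * x ^ (p-2) * x * y = p * (x ^ (p-2) * x) * y := by ring
      have e2 : p * y ^ (p-2) * y * x = p * (y ^ (p-2) * y) * x := by ring
      rw [e1, e2, pm1_eq hp hx, pm1_eq hp hy]
      exact lemC hp hx hy
    · set t := -y with ht_def
      have ht : 0 < t := by simp [ht_def]; linarith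
      have hy_eq : y = -t := by simp [ht_def]
      rw [abs_of_nonneg hx, hy_eq, abs_neg, abs_of_nonneg ht.le]
      have e1 : p * x ^ (p-2) * x * (-t) = -(p * (x ^ (p-2) * x) * t) := by ring
      have e2 : p * t ^ (p-2) * (-t) * x = -(p * (t ^ (p-2) * t) * x) := by ring
      rw [e1, e2, pm1_eq hp hx, pm1_eq hp ht.le]
      rcases le_or_gt t x with h | h
      · rw [show x + -t = x - t by ring, abs_of_nonneg (by linarith)]
        have := lemD hp ht.le h
        linarith
      · rw [show x + -t = -(t - x) by ring, abs_neg, abs_of_nonneg (by linarith)]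
        have := lemD hp hx h.le
        linarith
  rcases le_or_gt 0 x with hx | hx
  · exact main x y hx
  · have := main (-x) (-y) (by linarith)
    rw [abs_neg, abs_neg, show -x + -y = -(x+y) by ring, abs_neg] at this
    calc |x| ^ p + |y| ^ p + p * |x| ^ (p-2) * x * y + p * |y| ^ (p-2) * y * x
        = |x| ^ p + |y| ^ p + p * |x| ^ (p-2) * (-x) * (-y) + p * |y| ^ (p-2) * (-y) * (-x) := by
          ring
      _ ≤ |x + y| ^ p := this






lemma two_rpow_facts (hp : 3 ≤ p) :
    1 ≤ (2:ℝ) ^ (p-1) ∧ (2:ℝ) ^ (p-1) ≤ 2 ^ p ∧ (p:ℝ) - 1 ≤ 2 * 2 ^ p := by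
  have h1 : (1:ℝ) ≤ (2:ℝ) ^ (p-1) := by
    rw [show (1:ℝ) = (2:ℝ) ^ (0:ℝ) by simp]
    exact Real.rpow_le_rpow_of_exponent_le (by norm_num) (by linarith)
  have h2 : (2:ℝ) ^ (p-1) ≤ 2 ^ p :=
    Real.rpow_le_rpow_of_exponent_le (by norm_num) (by linarith)
  have h3 : 1 + p * 1 ≤ (1 + 1 : ℝ) ^ p :=
    one_add_mul_self_le_rpow_one_add (by norm_num) (by linarith)
  have h4 : (p:ℝ) - 1 ≤ 2 * 2 ^ p := by
    have : ((1:ℝ)+1) ^ p = 2 ^ p := by norm_num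
    rw [this] at h3
    nlinarith [Real.rpow_nonneg (show (0:ℝ) ≤ 2 by norm_num) p]
  exact ⟨h1, h2, h4⟩

/-- one-variable second-order upper bound on `[-1,1]`. -/
lemma P2a (hp : 3 ≤ p) {θ : ℝ} (h1 : -1 ≤ θ) (h2 : θ ≤ 1) :
    (1 + θ) ^ p ≤ 1 + p * θ + (p * 2 ^ p) * θ ^ 2 := by
  set C := p * 2 ^ p with hC
  set g : ℝ → ℝ := fun θ => 1 + p * θ + C * θ ^ 2 - (1 + θ) ^ p with hg
  obtain ⟨hf1, hf2, hf3⟩ := two_rpow_facts hp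
  have hderiv : ∀ x : ℝ, HasDerivAt g (p + 2 * C * x - p * (1 + x) ^ (p-1)) x := by
    intro x
    have hpow : HasDerivAt (fun y : ℝ => (1 + y) ^ p) (p * (1 + x) ^ (p-1) * 1) x := by
      have h0 : HasDerivAt (fun y : ℝ => 1 + y) 1 x := by
        simpa using (hasDerivAt_id x).const_add (1:ℝ)
      exact (Real.hasDerivAt_rpow_const (Or.inr (by linarith : (1:ℝ) ≤ p))).comp x h0
    have hpoly : HasDerivAt (fun y : ℝ => 1 + p * y + C * y ^ 2) (p + 2 * C * x) x := by
      have : HasDerivAt (fun y : ℝ => 1 + p * y + C * y ^ 2)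
          (0 + ((0:ℝ) * x + p * 1) + (0 * x ^ 2 + C * (↑2 * x ^ 1 * 1))) x := by
        exact (((hasDerivAt_const x (1:ℝ)).add
          ((hasDerivAt_const x p).mul (hasDerivAt_id x))).add
          ((hasDerivAt_const x C).mul ((hasDerivAt_id x).pow 2)))
      convert this using 1; push_cast; ring
    have := hpoly.sub hpow
    rw [mul_one] at this; exact this
  have hdiff : Differentiable ℝ g := fun x => (hderiv x).differentiableAt
  have hcont : Continuous g := hdiff.continuous
  have hg0 : g 0 = 0 := by simp [hg, Real.one_rpow]
  have hC0 : 0 ≤ C := by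
    have : (0:ℝ) ≤ 2 ^ p := Real.rpow_nonneg (by norm_num) p
    nlinarith
  -- deriv sign
  have hd : ∀ x, deriv g x = p + 2 * C * x - p * (1 + x) ^ (p-1) :=
    fun x => (hderiv x).deriv
  have key : 0 ≤ g θ := by
    rcases le_or_gt 0 θ with hθ | hθ
    · -- monotone on [0,1]
      have mono : MonotoneOn g (Icc (0:ℝ) 1) := by
        apply monotoneOn_of_deriv_nonneg (convex_Icc 0 1) hcont.continuousOn
          (hdiff.differentiableOn)
        intro x hx
        rw [interior_Icc] at hx
        rw [hd]
        -- chord bound : (1+x)^(p-1) ≤ 1 - x + x * 2^(p-1)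
        have hp0 : (0:ℝ) ≤ p := by linarith
        have chord : (1 + x) ^ (p-1) ≤ (1 - x) * 1 + x * 2 ^ (p-1) := by
          have hcvx := (convexOn_rpow (show (1:ℝ) ≤ p - 1 by linarith)).2
            (show (1:ℝ) ∈ Ici (0:ℝ) by norm_num)
            (show (2:ℝ) ∈ Ici (0:ℝ) by norm_num)
            (show (0:ℝ) ≤ 1 - x by linarith [hx.2])
            (show (0:ℝ) ≤ x by linarith [hx.1])
            (show (1 - x) + x = 1 by ring)
          simp only [smul_eq_mul] at hcvx
          rw [show (1-x) * 1 + x * 2 = 1 + x by ring] at hcvx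
          simpa [Real.one_rpow] using hcvx
        have hx0 : 0 ≤ x := hx.1.le
        have e0 : p * ((1+x) ^ (p-1)) ≤ p * ((1 - x) * 1 + x * 2 ^ (p-1)) :=
          mul_le_mul_of_nonneg_left chord hp0
        have e1 : p * (x * 2 ^ (p-1)) ≤ p * (x * 2 ^ p) :=
          mul_le_mul_of_nonneg_left (mul_le_mul_of_nonneg_left hf2 hx0) hp0
        have e2 : 0 ≤ p * x := mul_nonneg hp0 hx0
        have e3 : 0 ≤ p * (x * 2 ^ p) :=
          mul_nonneg hp0 (mul_nonneg hx0 (Real.rpow_nonneg (by norm_num) p))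
        nlinarith [e0, e1, e2, e3]
      have := mono (show (0:ℝ) ∈ Icc (0:ℝ) 1 by constructor <;> norm_num)
        (show θ ∈ Icc (0:ℝ) 1 by exact ⟨hθ, h2⟩) hθ
      linarith [hg0 ▸ this]
    · -- antitone on [-1,0]
      have anti : AntitoneOn g (Icc (-1:ℝ) 0) := by
        apply antitoneOn_of_deriv_nonpos (convex_Icc (-1) 0) hcont.continuousOn
          (hdiff.differentiableOn)
        intro x hx
        rw [interior_Icc] at hx
        rw [hd]
        have bern : 1 + (p-1) * x ≤ (1 + x) ^ (p-1) :=
          one_add_mul_self_le_rpow_one_add (by linarith [hx.1] : (-1:ℝ) ≤ x)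
            (by linarith : (1:ℝ) ≤ p - 1)
        have hx0 : x ≤ 0 := hx.2.le
        have hp0 : (0:ℝ) ≤ p := by linarith
        have e0 : p * (1 + (p-1) * x) ≤ p * ((1+x) ^ (p-1)) :=
          mul_le_mul_of_nonneg_left bern hp0
        have e4 : p * (p - 1) ≤ 2 * C := by
          have := mul_le_mul_of_nonneg_left hf3 hp0
          rw [hC]; nlinarith
        have e5 : 0 ≤ (-x) * (2 * C - p * (p-1)) :=
          mul_nonneg (by linarith) (by linarith)
        nlinarith [e0, e5]
      have := anti (show θ ∈ Icc (-1:ℝ) 0 by exact ⟨h1, hθ.le⟩)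
        (show (0:ℝ) ∈ Icc (-1:ℝ) 0 by constructor <;> norm_num) hθ.le
      linarith [hg0 ▸ this]
  simp only [hg] at key
  linarith






lemma pm1_mul_eq (hp : 3 ≤ p) {z : ℝ} (hz : 0 ≤ z) : z ^ (p-1) * z = z ^ p := by
  rcases eq_or_lt_of_le hz with h | h
  · rw [← h, Real.zero_rpow (by norm_num; linarith), Real.zero_rpow (by linarith)]
    ring
  · have := rpow_add_eq h (show (p-1) + 1 = p by ring)
    rwa [Real.rpow_one] at this

/-- Young-type pointwise bound. -/
lemma L3 (hp : 3 ≤ p) (a b : ℝ) : |a| ^ (p-2) * b ^ (2:ℕ) ≤ |a| ^ p + |b| ^ p := by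
  have hb2 : b ^ (2:ℕ) = |b| ^ (2:ℕ) := (sq_abs b).symm
  rcases le_total |a| |b| with h | h
  · have h1 : |a| ^ (p-2) ≤ |b| ^ (p-2) :=
      Real.rpow_le_rpow (abs_nonneg a) h (by linarith)
    calc |a| ^ (p-2) * b ^ (2:ℕ) ≤ |b| ^ (p-2) * b ^ (2:ℕ) := by
          apply mul_le_mul_of_nonneg_right h1 (by positivity)
      _ = |b| ^ p := by rw [hb2]; exact pm2_sq_eq hp (abs_nonneg b)
      _ ≤ |a| ^ p + |b| ^ p := by
          have : (0:ℝ) ≤ |a| ^ p := Real.rpow_nonneg (abs_nonneg a) p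
          linarith
  · have h1 : b ^ (2:ℕ) ≤ |a| ^ (2:ℕ) := by
      rw [hb2]; exact pow_le_pow_left₀ (abs_nonneg b) h 2
    calc |a| ^ (p-2) * b ^ (2:ℕ) ≤ |a| ^ (p-2) * |a| ^ (2:ℕ) := by
          apply mul_le_mul_of_nonneg_left h1 (Real.rpow_nonneg (abs_nonneg a) _)
      _ = |a| ^ p := pm2_sq_eq hp (abs_nonneg a)
      _ ≤ |a| ^ p + |b| ^ p := by
          have : (0:ℝ) ≤ |b| ^ p := Real.rpow_nonneg (abs_nonneg b) p
          linarith

/-- Key pointwise upper inequality P2. -/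
lemma P2 (hp : 3 ≤ p) (a b : ℝ) :
    |a + b| ^ p ≤ |a| ^ p + p * (|a| ^ (p-2) * a * b)
      + (p * 2 ^ p + 2 ^ p + p) * (|a| ^ (p-2) * b ^ (2:ℕ))
      + (p * 2 ^ p + 2 ^ p + p) * |b| ^ p := by
  set K := p * 2 ^ p + 2 ^ p + p with hK
  have h2p : (0:ℝ) ≤ 2 ^ p := Real.rpow_nonneg (by norm_num) p
  have h2p1 : (1:ℝ) ≤ 2 ^ p := by
    rw [show (1:ℝ) = (2:ℝ) ^ (0:ℝ) by simp]
    exact Real.rpow_le_rpow_of_exponent_le (by norm_num) (by linarith)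
  have hK1 : 1 ≤ K := by nlinarith
  have hp0 : (0:ℝ) < p := by linarith
  rcases eq_or_ne a 0 with ha | ha
  · subst ha
    simp only [abs_zero, zero_add]
    rw [Real.zero_rpow (by linarith : p ≠ 0), Real.zero_rpow (by norm_num; linarith : p - 2 ≠ 0)]
    have : (0:ℝ) ≤ |b| ^ p := Real.rpow_nonneg (abs_nonneg b) p
    nlinarith
  · have ha0 : 0 < |a| := abs_pos.mpr ha
    rcases le_total |b| |a| with hba | hba
    · -- |b| ≤ |a| : use P2a with θ = b/a
      set θ := b / a with hθ
      have hθ1 : |θ| ≤ 1 := by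
        rw [hθ, abs_div, div_le_one ha0]; exact hba
      have habs : |a + b| = |a| * |1 + θ| := by
        rw [← abs_mul]
        congr 1
        rw [hθ]; field_simp
      have e0 : |a + b| ^ p = |a| ^ p * |1 + θ| ^ p := by
        rw [habs, Real.mul_rpow (abs_nonneg a) (abs_nonneg _)]
      have e1 : |1 + θ| ^ p = (1 + θ) ^ p := by
        rw [abs_of_nonneg (by cases abs_le.mp hθ1; linarith)]
      have key := P2a hp (abs_le.mp hθ1).1 (abs_le.mp hθ1).2
      -- multiply by |a|^p
      have hap : (0:ℝ) ≤ |a| ^ p := Real.rpow_nonneg (abs_nonneg a) p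
      have mul_key : |a + b| ^ p ≤ |a| ^ p * (1 + p * θ + (p * 2 ^ p) * θ ^ 2) := by
        rw [e0, e1]
        exact mul_le_mul_of_nonneg_left key hap
      -- identify terms
      have hapm2 : |a| ^ p = |a| ^ (p-2) * a ^ (2:ℕ) := by
        rw [← sq_abs]; exact (pm2_sq_eq hp (abs_nonneg a)).symm
      have t1 : |a| ^ p * θ = |a| ^ (p-2) * a * b := by
        rw [hapm2, hθ]; field_simp
      have t2 : |a| ^ p * θ ^ 2 = |a| ^ (p-2) * b ^ (2:ℕ) := by
        rw [hapm2, hθ]; field_simp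
      have hbp : (0:ℝ) ≤ |b| ^ p := Real.rpow_nonneg (abs_nonneg b) p
      have habm2 : (0:ℝ) ≤ |a| ^ (p-2) * b ^ (2:ℕ) := by positivity
      calc |a + b| ^ p ≤ |a| ^ p * (1 + p * θ + (p * 2 ^ p) * θ ^ 2) := mul_key
        _ = |a| ^ p + p * (|a| ^ p * θ) + (p * 2 ^ p) * (|a| ^ p * θ ^ 2) := by ring
        _ = |a| ^ p + p * (|a| ^ (p-2) * a * b) + (p * 2 ^ p) * (|a| ^ (p-2) * b ^ (2:ℕ)) := by
            rw [t1, t2]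
        _ ≤ |a| ^ p + p * (|a| ^ (p-2) * a * b) + K * (|a| ^ (p-2) * b ^ (2:ℕ)) + K * |b| ^ p := by
            have h7 : (p * 2 ^ p) * (|a| ^ (p-2) * b ^ (2:ℕ)) ≤ K * (|a| ^ (p-2) * b ^ (2:ℕ)) := by
              apply mul_le_mul_of_nonneg_right _ habm2
              rw [hK]; linarith
            have h8 : 0 ≤ K * |b| ^ p := mul_nonneg (by linarith) hbp
            linarith
    · -- |a| ≤ |b| : crude bound
      have hb0 : 0 < |b| := lt_of_lt_of_le ha0 hba
      have l1 : |a + b| ^ p ≤ 2 ^ p * |b| ^ p := by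
        have : |a + b| ≤ 2 * |b| := by
          calc |a + b| ≤ |a| + |b| := abs_add_le a b
            _ ≤ 2 * |b| := by linarith
        calc |a + b| ^ p ≤ (2 * |b|) ^ p :=
              Real.rpow_le_rpow (abs_nonneg _) this (by linarith)
          _ = 2 ^ p * |b| ^ p := Real.mul_rpow (by norm_num) (abs_nonneg b)
      have l2 : -(p * (|a| ^ (p-2) * a * b)) ≤ p * |b| ^ p := by
        have e1 : |(|a| ^ (p-2) * a * b)| = |a| ^ (p-1) * |b| := by
          rw [abs_mul, abs_mul, abs_of_nonneg (Real.rpow_nonneg (abs_nonneg a) _),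
            pm1_eq hp (abs_nonneg a)]
        have e2 : |a| ^ (p-1) * |b| ≤ |b| ^ p := by
          calc |a| ^ (p-1) * |b| ≤ |b| ^ (p-1) * |b| := by
                apply mul_le_mul_of_nonneg_right _ (abs_nonneg b)
                exact Real.rpow_le_rpow (abs_nonneg a) hba (by linarith)
            _ = |b| ^ p := pm1_mul_eq hp (abs_nonneg b)
        have := neg_abs_le (|a| ^ (p-2) * a * b)
        have h3 : -(|a| ^ (p-2) * a * b) ≤ |b| ^ p := by
          calc -(|a| ^ (p-2) * a * b) ≤ |(|a| ^ (p-2) * a * b)| := neg_le_abs _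
            _ = |a| ^ (p-1) * |b| := e1
            _ ≤ |b| ^ p := e2
        nlinarith
      have hap : (0:ℝ) ≤ |a| ^ p := Real.rpow_nonneg (abs_nonneg a) p
      have hbp : (0:ℝ) ≤ |b| ^ p := Real.rpow_nonneg (abs_nonneg b) p
      have habm2 : (0:ℝ) ≤ |a| ^ (p-2) * b ^ (2:ℕ) := by positivity
      -- RHS ≥ -p|b|^p + K|b|^p ≥ 2^p |b|^p ≥ LHS
      have hKb : K * |b| ^ p = p * 2 ^ p * |b| ^ p + 2 ^ p * |b| ^ p + p * |b| ^ p := by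
        rw [hK]; ring
      have h5 : 0 ≤ p * 2 ^ p * |b| ^ p := mul_nonneg (mul_nonneg hp0.le h2p) hbp
      have h6 : 0 ≤ K * (|a| ^ (p-2) * b ^ (2:ℕ)) := mul_nonneg (by linarith) habm2
      have final : 2 ^ p * |b| ^ p ≤ |a| ^ p + p * (|a| ^ (p-2) * a * b)
          + K * (|a| ^ (p-2) * b ^ (2:ℕ)) + K * |b| ^ p := by linarith
      exact l1.trans final




variable {Ω : Type*} [MeasurableSpace Ω] {μ : Measure Ω}

lemma ofReal_ne_zero_of_pos {r : ℝ} (hr : 0 < r) : ENNReal.ofReal r ≠ 0 := by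
  simp [ENNReal.ofReal_eq_zero]; linarith

/-- norm as integral for Lp elements. -/
lemma norm_eq_integral {r : ℝ} (hr : 0 < r) [Fact (1 ≤ ENNReal.ofReal r)]
    (f : Lp ℝ (ENNReal.ofReal r) μ) :
    ‖f‖ = (∫ a, |(f : Ω → ℝ) a| ^ r ∂μ) ^ r⁻¹ := by
  have hf := Lp.memLp f
  have h := hf.eLpNorm_eq_integral_rpow_norm (ofReal_ne_zero_of_pos hr) ENNReal.ofReal_ne_top
  rw [Lp.norm_def, h, ENNReal.toReal_ofReal]
  · congr 1
    · congr 1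
      · ext a; rw [Real.norm_eq_abs, ENNReal.toReal_ofReal hr.le]
    · rw [ENNReal.toReal_ofReal hr.le]
  · positivity

lemma integral_rpow_eq_norm {r : ℝ} (hr : 0 < r) [Fact (1 ≤ ENNReal.ofReal r)]
    (f : Lp ℝ (ENNReal.ofReal r) μ) :
    ∫ a, |(f : Ω → ℝ) a| ^ r ∂μ = ‖f‖ ^ r := by
  have h0 : (0:ℝ) ≤ ∫ a, |(f : Ω → ℝ) a| ^ r ∂μ :=
    integral_nonneg fun a => by positivity
  rw [norm_eq_integral hr f, ← Real.rpow_mul h0, inv_mul_cancel₀ (by linarith : r ≠ 0),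
    Real.rpow_one]

lemma integrable_rpow {r : ℝ} (hr : 0 < r) [Fact (1 ≤ ENNReal.ofReal r)]
    (f : Lp ℝ (ENNReal.ofReal r) μ) :
    Integrable (fun a => |(f : Ω → ℝ) a| ^ r) μ := by
  have := (Lp.memLp f).integrable_norm_rpow (ofReal_ne_zero_of_pos hr) ENNReal.ofReal_ne_top
  simpa [Real.norm_eq_abs, ENNReal.toReal_ofReal hr.le] using this

/-- product of conjugate MemLp functions is integrable. -/
lemma integrable_mul_conj {p q : ℝ} (hp : 0 < p) (hq : 0 < q) (hpq : 1/p + 1/q = 1)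
    {f g : Ω → ℝ} (hf : MemLp f (ENNReal.ofReal p) μ) (hg : MemLp g (ENNReal.ofReal q) μ) :
    Integrable (fun a => f a * g a) μ := by
  have h1 : (1:ℝ≥0∞)/1 = 1/(ENNReal.ofReal q) + 1/(ENNReal.ofReal p) := by
    rw [one_div, one_div, one_div, inv_one,
      ← ENNReal.ofReal_inv_of_pos hq, ← ENNReal.ofReal_inv_of_pos hp,
      ← ENNReal.ofReal_add (by positivity) (by positivity)]
    rw [show q⁻¹ + p⁻¹ = 1 by rw [← one_div, ← one_div]; linarith]
    simp
  have := hf.smul hg (r := 1) (hpqr := ⟨by simpa [one_div] using h1.symm⟩)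
  rw [memLp_one_iff_integrable] at this
  apply this.congr
  filter_upwards with a
  simp [Pi.smul_apply', smul_eq_mul, mul_comm]

/-- the dual-type element |f|^{p-2} f is in L^q. -/
lemma memQ {p q : ℝ} (hp : 3 ≤ p) (hq : 0 < q) (hqp : q * (p-1) = p)
    [Fact (1 ≤ ENNReal.ofReal p)]
    (f : Lp ℝ (ENNReal.ofReal p) μ) :
    MemLp (fun a => |(f : Ω → ℝ) a| ^ (p-2) * (f : Ω → ℝ) a) (ENNReal.ofReal q) μ := by
  have hmeas : AEStronglyMeasurable
      (fun a => |(f : Ω → ℝ) a| ^ (p-2) * (f : Ω → ℝ) a) μ := by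
    have hf := Lp.aestronglyMeasurable f
    exact ((hf.norm.aemeasurable.pow_const (p-2)).mul hf.aemeasurable).aestronglyMeasurable
  refine ⟨hmeas, ?_⟩
  have hnorm : (fun a => ‖(fun a => |(f : Ω → ℝ) a| ^ (p-2) * (f : Ω → ℝ) a) a‖)
      = fun a => ‖(f : Ω → ℝ) a‖ ^ (p-1) := by
    ext a
    rw [norm_mul, Real.norm_eq_abs, Real.norm_eq_abs, abs_of_nonneg (by positivity : (0:ℝ) ≤ |(f : Ω → ℝ) a| ^ (p-2))]
    exact pm1_eq hp (abs_nonneg _)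
  have key : eLpNorm (fun a => |(f : Ω → ℝ) a| ^ (p-2) * (f : Ω → ℝ) a) (ENNReal.ofReal q) μ
      = eLpNorm (f : Ω → ℝ) (ENNReal.ofReal p) μ ^ (p-1) := by
    rw [← eLpNorm_norm, hnorm,
      eLpNorm_norm_rpow (f : Ω → ℝ) (show (0:ℝ) < p - 1 by linarith),
      ← ENNReal.ofReal_mul hq.le, hqp]
  rw [key]
  exact ENNReal.rpow_lt_top_of_nonneg (by linarith) (Lp.eLpNorm_ne_top f)

lemma memQ_norm_le {p q : ℝ} (hp : 3 ≤ p) (hq : 0 < q) (hqp : q * (p-1) = p)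
    [Fact (1 ≤ ENNReal.ofReal p)]
    (f : Lp ℝ (ENNReal.ofReal p) μ) :
    ‖(memQ hp hq hqp f).toLp (fun a => |(f : Ω → ℝ) a| ^ (p-2) * (f : Ω → ℝ) a)‖
      ≤ ‖f‖ ^ (p-1) := by
  rw [Lp.norm_toLp]
  have key : eLpNorm (fun a => |(f : Ω → ℝ) a| ^ (p-2) * (f : Ω → ℝ) a) (ENNReal.ofReal q) μ
      = eLpNorm (f : Ω → ℝ) (ENNReal.ofReal p) μ ^ (p-1) := by
    have hnorm : (fun a => ‖(fun a => |(f : Ω → ℝ) a| ^ (p-2) * (f : Ω → ℝ) a) a‖)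
        = fun a => ‖(f : Ω → ℝ) a‖ ^ (p-1) := by
      ext a
      rw [norm_mul, Real.norm_eq_abs, Real.norm_eq_abs, abs_of_nonneg (by positivity : (0:ℝ) ≤ |(f : Ω → ℝ) a| ^ (p-2))]
      exact pm1_eq hp (abs_nonneg _)
    rw [← eLpNorm_norm, hnorm,
      eLpNorm_norm_rpow (f : Ω → ℝ) (show (0:ℝ) < p - 1 by linarith),
      ← ENNReal.ofReal_mul hq.le, hqp]
  rw [key, ← ENNReal.toReal_rpow, ← Lp.norm_def]


section NormBound

variable {Ω : Type*} [MeasurableSpace Ω] {μ : Measure Ω}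

lemma holder_abs_integral {p q : ℝ} (hp : 3 ≤ p) (hq : 0 < q) (hpq : 1/p + 1/q = 1)
    [Fact (1 ≤ ENNReal.ofReal p)] [Fact (1 ≤ ENNReal.ofReal q)]
    (f : Lp ℝ (ENNReal.ofReal p) μ) (v : Lp ℝ (ENNReal.ofReal q) μ) :
    |∫ a, (f : Ω → ℝ) a * (v : Ω → ℝ) a ∂μ| ≤ ‖f‖ * ‖v‖ := by
  have hp0 : (0:ℝ) < p := by linarith
  have conj : Real.HolderConjugate p q :=
    ⟨by rw [inv_one, ← one_div, ← one_div]; exact hpq, hp0, hq⟩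
  have hint : Integrable (fun a => (f : Ω → ℝ) a * (v : Ω → ℝ) a) μ :=
    integrable_mul_conj hp0 hq hpq (Lp.memLp f) (Lp.memLp v)
  calc |∫ a, (f : Ω → ℝ) a * (v : Ω → ℝ) a ∂μ|
      ≤ ∫ a, ‖(f : Ω → ℝ) a * (v : Ω → ℝ) a‖ ∂μ := by
        rw [← Real.norm_eq_abs]; exact norm_integral_le_integral_norm _
    _ = ∫ a, ‖(f : Ω → ℝ) a‖ * ‖(v : Ω → ℝ) a‖ ∂μ := by
        congr 1; ext a; rw [norm_mul]
    _ ≤ (∫ a, ‖(f : Ω → ℝ) a‖ ^ p ∂μ) ^ (1/p) * (∫ a, ‖(v : Ω → ℝ) a‖ ^ q ∂μ) ^ (1/q) :=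
        integral_mul_norm_le_Lp_mul_Lq conj (Lp.memLp f) (Lp.memLp v)
    _ = ‖f‖ * ‖v‖ := by
        rw [show (fun a => ‖(f : Ω → ℝ) a‖ ^ p) = fun a => |(f : Ω → ℝ) a| ^ p by
            ext a; rw [Real.norm_eq_abs],
          show (fun a => ‖(v : Ω → ℝ) a‖ ^ q) = fun a => |(v : Ω → ℝ) a| ^ q by
            ext a; rw [Real.norm_eq_abs],
          one_div, one_div, ← norm_eq_integral hp0 f, ← norm_eq_integral hq v]

lemma mul_dual_eq (hp : 3 ≤ p) (z : ℝ) : z * (|z| ^ (p-2) * z) = |z| ^ p := by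
  have : z * (|z| ^ (p-2) * z) = |z| ^ (p-2) * z ^ (2:ℕ) := by ring
  rw [this, show z ^ (2:ℕ) = |z| ^ (2:ℕ) by rw [sq_abs], pm2_sq_eq hp (abs_nonneg z)]

lemma norm_bound {p q : ℝ} (hp : 3 ≤ p) (hq : 0 < q) (hpq : 1/p + 1/q = 1)
    (hqp : q * (p-1) = p)
    [Fact (1 ≤ ENNReal.ofReal p)] [Fact (1 ≤ ENNReal.ofReal q)]
    (u : ℕ → Lp ℝ (ENNReal.ofReal p) μ)
    (hbdd : ∀ v : Lp ℝ (ENNReal.ofReal q) μ,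
      ∃ C, ∀ n, |∫ a, (u n : Ω → ℝ) a * (v : Ω → ℝ) a ∂μ| ≤ C) :
    ∃ C, 0 ≤ C ∧ ∀ n, ‖u n‖ ≤ C := by
  have hp0 : (0:ℝ) < p := by linarith
  -- the family of functionals
  have Tlin : ∀ f : Lp ℝ (ENNReal.ofReal p) μ,
      ∃ T : Lp ℝ (ENNReal.ofReal q) μ →L[ℝ] ℝ,
        (∀ v, T v = ∫ a, (f : Ω → ℝ) a * (v : Ω → ℝ) a ∂μ) ∧ ‖T‖ ≤ ‖f‖ := by
    intro f
    have hint : ∀ v : Lp ℝ (ENNReal.ofReal q) μ,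
        Integrable (fun a => (f : Ω → ℝ) a * (v : Ω → ℝ) a) μ := fun v =>
      integrable_mul_conj hp0 hq hpq (Lp.memLp f) (Lp.memLp v)
    set L : Lp ℝ (ENNReal.ofReal q) μ →ₗ[ℝ] ℝ :=
      { toFun := fun v => ∫ a, (f : Ω → ℝ) a * (v : Ω → ℝ) a ∂μ
        map_add' := by
          intro v w
          rw [← integral_add (hint v) (hint w)]
          apply integral_congr_ae
          filter_upwards [Lp.coeFn_add v w] with a ha
          rw [ha]; simp; ring
        map_smul' := by
          intro c v
          simp only [RingHom.id_apply, smul_eq_mul]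
          rw [← integral_const_mul]
          apply integral_congr_ae
          filter_upwards [Lp.coeFn_smul c v] with a ha
          rw [ha]; simp; ring } with hL
    refine ⟨LinearMap.mkContinuous L ‖f‖ ?_, fun v => rfl, LinearMap.mkContinuous_norm_le L (norm_nonneg f) _⟩
    intro v
    rw [Real.norm_eq_abs]
    exact holder_abs_integral hp hq hpq f v
  choose T hT hTnorm using Tlin
  obtain ⟨C', hC'⟩ := banach_steinhaus (g := fun n => T (u n)) (by
    intro v
    obtain ⟨C, hC⟩ := hbdd v
    exact ⟨C, fun n => by rw [Real.norm_eq_abs, hT (u n) v]; exact hC n⟩)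
  have hC'0 : 0 ≤ C' := le_trans (norm_nonneg _) (hC' 0)
  refine ⟨C', hC'0, fun n => ?_⟩
  set x := ‖u n‖ with hx
  have hx0 : 0 ≤ x := norm_nonneg _
  -- evaluate on the dual element
  set vn := (memQ hp hq hqp (u n)).toLp
    (fun a => |(u n : Ω → ℝ) a| ^ (p-2) * (u n : Ω → ℝ) a) with hvn
  have h1 : T (u n) vn = x ^ p := by
    rw [hT (u n) vn]
    have e1 : ∫ a, (u n : Ω → ℝ) a * (vn : Ω → ℝ) a ∂μ
        = ∫ a, |(u n : Ω → ℝ) a| ^ p ∂μ := by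
      apply integral_congr_ae
      filter_upwards [(memQ hp hq hqp (u n)).coeFn_toLp] with a ha
      rw [ha, mul_dual_eq hp]
    rw [e1, integral_rpow_eq_norm hp0]
  have h2 : x ^ p ≤ C' * x ^ (p-1) := by
    calc x ^ p = T (u n) vn := h1.symm
      _ ≤ |T (u n) vn| := le_abs_self _
      _ ≤ ‖T (u n)‖ * ‖vn‖ := by
          rw [← Real.norm_eq_abs]; exact (T (u n)).le_opNorm vn
      _ ≤ C' * x ^ (p-1) := by
          apply mul_le_mul (hC' n) (memQ_norm_le hp hq hqp (u n)) (norm_nonneg _) hC'0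
  rcases eq_or_lt_of_le hx0 with h0 | h0
  · rw [← h0]; exact hC'0
  · have hxp : x ^ p = x ^ (p-1) * x := (pm1_mul_eq hp hx0).symm
    have hpos : 0 < x ^ (p-1) := Real.rpow_pos_of_pos h0 _
    rw [hxp] at h2
    -- x ^ (p-1) * x ≤ C' * x ^ (p-1)
    nlinarith

end NormBound

end Stmt19


end Stmt19Helpers

set_option maxHeartbeats 1000000 in
open Stmt19 Real Set in
/-- Brezis–Lieb type inequality for `p ≥ 3` under weak and polar
convergence in `L^p`. -/
theorem stmt_19 {Ω : Type*} [MeasurableSpace Ω] (μ : MeasureTheory.Measure Ω)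
    (p q : ℝ) (hp : 3 ≤ p) (hpq : 1 / p + 1 / q = 1)
    [Fact (1 ≤ ENNReal.ofReal p)]
    (u : ℕ → MeasureTheory.Lp ℝ (ENNReal.ofReal p) μ)
    (U : MeasureTheory.Lp ℝ (ENNReal.ofReal p) μ)
    (hweak : ∀ v : MeasureTheory.Lp ℝ (ENNReal.ofReal q) μ,
      Filter.Tendsto (fun n => ∫ a, (u n : Ω → ℝ) a * (v : Ω → ℝ) a ∂μ) Filter.atTop
        (nhds (∫ a, (U : Ω → ℝ) a * (v : Ω → ℝ) a ∂μ)))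
    (hpolar : PolarLim u U) :
    0 ≤ Filter.liminf (fun n =>
      (∫ a, |(u n : Ω → ℝ) a| ^ p ∂μ) - (∫ a, |(U : Ω → ℝ) a| ^ p ∂μ) -
        ∫ a, |(u n : Ω → ℝ) a - (U : Ω → ℝ) a| ^ p ∂μ) Filter.atTop := by
  have hp0 : (0:ℝ) < p := by linarith
  have hq0 : (0:ℝ) < q := by
    rcases lt_trichotomy q 0 with h | h | h
    · have h1 : 1/q < 0 := div_neg_of_pos_of_neg one_pos h
      have h2 : (1:ℝ)/p ≤ 1/3 := by
        rw [div_le_div_iff₀ hp0 (by norm_num)]; linarith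
      linarith
    · rw [h] at hpq; simp at hpq
      have h2 : (1:ℝ)/p ≤ 1/3 := by
        rw [div_le_div_iff₀ hp0 (by norm_num)]; linarith
      linarith
    · exact h
  have hq_ne : q ≠ 0 := ne_of_gt hq0
  have hqp : q * (p - 1) = p := by
    have e : (1/p + 1/q) * (p * q) = 1 * (p * q) := by rw [hpq]
    have e2 : q + p = p * q := by
      field_simp at e; linarith
    nlinarith
  have hq1 : (1:ℝ) ≤ q := by nlinarith
  haveI hQfact : Fact (1 ≤ ENNReal.ofReal q) := ⟨by
    rw [← ENNReal.ofReal_one]; exact ENNReal.ofReal_le_ofReal hq1⟩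
  set A : ℕ → ℝ := fun n =>
      (∫ a, |(u n : Ω → ℝ) a| ^ p ∂μ) - (∫ a, |(U : Ω → ℝ) a| ^ p ∂μ) -
        ∫ a, |(u n : Ω → ℝ) a - (U : Ω → ℝ) a| ^ p ∂μ with hA
  suffices H : ∀ ε > (0:ℝ), ∀ᶠ n in atTop, -ε ≤ A n by
    rw [Filter.liminf_eq]
    by_cases hbdd : BddAbove {a | ∀ᶠ n in atTop, a ≤ A n}
    · by_contra hneg
      push_neg at hneg
      set s := sSup {a | ∀ᶠ n in atTop, a ≤ A n} with hs
      have hmem : (s/2 : ℝ) ∈ {a | ∀ᶠ n in atTop, a ≤ A n} := by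
        have := H (-(s/2)) (by linarith)
        simpa using this
      have := le_csSup hbdd hmem
      linarith
    · rw [csSup_of_not_bddAbove hbdd, Real.sSup_empty]
  intro ε hε
  -- difference sequence
  set h : ℕ → Lp ℝ (ENNReal.ofReal p) μ := fun n => u n - U with hh
  have hcoe : ∀ n, (h n : Ω → ℝ) =ᵐ[μ]
      fun a => (u n : Ω → ℝ) a - (U : Ω → ℝ) a := fun n => Lp.coeFn_sub (u n) U
  set V : Ω → ℝ := fun a => |(U : Ω → ℝ) a| ^ (p-2) * (U : Ω → ℝ) a with hV
  have hVmem : MemLp V (ENNReal.ofReal q) μ := memQ hp hq0 hqp U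
  set W : ℕ → Ω → ℝ := fun n a => |(h n : Ω → ℝ) a| ^ (p-2) * (h n : Ω → ℝ) a with hW
  have hWmem : ∀ n, MemLp (W n) (ENNReal.ofReal q) μ := fun n => memQ hp hq0 hqp (h n)
  -- integrability
  have hupint : ∀ n, Integrable (fun a => |(u n : Ω → ℝ) a| ^ p) μ :=
    fun n => integrable_rpow hp0 (u n)
  have hUint : Integrable (fun a => |(U : Ω → ℝ) a| ^ p) μ := integrable_rpow hp0 U
  have hhint : ∀ n, Integrable (fun a => |(h n : Ω → ℝ) a| ^ p) μ :=
    fun n => integrable_rpow hp0 (h n)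
  have hVf : ∀ f : Lp ℝ (ENNReal.ofReal p) μ,
      Integrable (fun a => V a * (f : Ω → ℝ) a) μ := fun f =>
    (integrable_mul_conj hp0 hq0 hpq (Lp.memLp f) hVmem).congr
      (Filter.Eventually.of_forall fun a => mul_comm _ _)
  have hWU : ∀ n, Integrable (fun a => W n a * (U : Ω → ℝ) a) μ := fun n =>
    (integrable_mul_conj hp0 hq0 hpq (Lp.memLp U) (hWmem n)).congr
      (Filter.Eventually.of_forall fun a => mul_comm _ _)
  have hthird : ∀ n, ∫ a, |(u n : Ω → ℝ) a - (U : Ω → ℝ) a| ^ p ∂μ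
      = ∫ a, |(h n : Ω → ℝ) a| ^ p ∂μ := by
    intro n
    apply integral_congr_ae
    filter_upwards [hcoe n] with a ha
    rw [ha]
  set bn : ℕ → ℝ := fun n => ∫ a, V a * (h n : Ω → ℝ) a ∂μ with hbn
  set cn : ℕ → ℝ := fun n => ∫ a, W n a * (U : Ω → ℝ) a ∂μ with hcn
  -- STEP 1 : A n ≥ p bn + p cn
  have step1 : ∀ n, p * bn n + p * cn n ≤ A n := by
    intro n
    have point : (fun a => |(U : Ω → ℝ) a| ^ p + |(h n : Ω → ℝ) a| ^ p
        + p * (V a * (h n : Ω → ℝ) a) + p * (W n a * (U : Ω → ℝ) a))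
        ≤ᵐ[μ] fun a => |(u n : Ω → ℝ) a| ^ p := by
      filter_upwards [hcoe n] with a ha
      have hsum : (U : Ω → ℝ) a + (h n : Ω → ℝ) a = (u n : Ω → ℝ) a := by rw [ha]; ring
      have hP1 := P1 hp ((U : Ω → ℝ) a) ((h n : Ω → ℝ) a)
      rw [hsum] at hP1
      have e1 : p * (V a * (h n : Ω → ℝ) a)
          = p * |(U : Ω → ℝ) a| ^ (p-2) * (U : Ω → ℝ) a * (h n : Ω → ℝ) a := by
        rw [hV]; ring
      have e2 : p * (W n a * (U : Ω → ℝ) a)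
          = p * |(h n : Ω → ℝ) a| ^ (p-2) * (h n : Ω → ℝ) a * (U : Ω → ℝ) a := by
        rw [hW]; ring
      linarith
    have i3 : Integrable (fun a => p * (V a * (h n : Ω → ℝ) a)) μ := (hVf (h n)).const_mul p
    have i4 : Integrable (fun a => p * (W n a * (U : Ω → ℝ) a)) μ := (hWU n).const_mul p
    have i12 : Integrable (fun a => |(U : Ω → ℝ) a| ^ p + |(h n : Ω → ℝ) a| ^ p) μ :=
      hUint.add (hhint n)
    have i123 : Integrable (fun a => |(U : Ω → ℝ) a| ^ p + |(h n : Ω → ℝ) a| ^ p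
        + p * (V a * (h n : Ω → ℝ) a)) μ := i12.add i3
    have rhs_int : Integrable (fun a => |(U : Ω → ℝ) a| ^ p + |(h n : Ω → ℝ) a| ^ p
        + p * (V a * (h n : Ω → ℝ) a) + p * (W n a * (U : Ω → ℝ) a)) μ := i123.add i4
    have int_le := integral_mono_ae rhs_int (hupint n) point
    rw [integral_add i123 i4, integral_add i12 i3, integral_add hUint (hhint n),
      integral_const_mul, integral_const_mul] at int_le
    rw [hA]
    simp only []
    rw [hthird n]
    rw [hbn, hcn]
    simp only []
    linarith
  -- STEP 2 : bn → 0
  have step2 : Tendsto bn atTop (nhds 0) := by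
    set v : Lp ℝ (ENNReal.ofReal q) μ := hVmem.toLp V with hv
    have hv_coe : (v : Ω → ℝ) =ᵐ[μ] V := hVmem.coeFn_toLp
    have e1 : ∀ f : Lp ℝ (ENNReal.ofReal p) μ,
        ∫ a, (f : Ω → ℝ) a * (v : Ω → ℝ) a ∂μ = ∫ a, V a * (f : Ω → ℝ) a ∂μ := by
      intro f
      apply integral_congr_ae
      filter_upwards [hv_coe] with a ha
      rw [ha]; ring
    have e2 : ∀ n, bn n = (∫ a, (u n : Ω → ℝ) a * (v : Ω → ℝ) a ∂μ)
        - ∫ a, (U : Ω → ℝ) a * (v : Ω → ℝ) a ∂μ := by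
      intro n
      rw [e1 (u n), e1 U, ← integral_sub (hVf (u n)) (hVf U), hbn]
      simp only []
      apply integral_congr_ae
      filter_upwards [hcoe n] with a ha
      rw [ha]; ring
    have conv := (hweak v).sub_const (∫ a, (U : Ω → ℝ) a * (v : Ω → ℝ) a ∂μ)
    rw [sub_self] at conv
    exact conv.congr fun n => (e2 n).symm
  -- STEP 3 : boundedness
  have hBddEach : ∀ v : Lp ℝ (ENNReal.ofReal q) μ,
      ∃ C, ∀ n, |∫ a, (u n : Ω → ℝ) a * (v : Ω → ℝ) a ∂μ| ≤ C := by
    intro v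
    have habs := (hweak v).abs
    obtain ⟨C, hC⟩ := habs.bddAbove_range
    exact ⟨C, fun n => hC (Set.mem_range_self n)⟩
  obtain ⟨C, hC0, hCb⟩ := norm_bound hp hq0 hpq hqp u hBddEach
  set M := C + ‖U‖ with hM
  have hM0 : 0 ≤ M := add_nonneg hC0 (norm_nonneg U)
  have hMb : ∀ n, ‖h n‖ ≤ M := by
    intro n
    rw [hh]
    simp only []
    calc ‖u n - U‖ ≤ ‖u n‖ + ‖U‖ := norm_sub_le _ _
      _ ≤ M := by rw [hM]; have := hCb n; linarith
  -- constants
  set E := ∫ a, |(U : Ω → ℝ) a| ^ p ∂μ with hE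
  have hE0 : 0 ≤ E := integral_nonneg fun a => by positivity
  set K := p * 2 ^ p + 2 ^ p + p with hK
  have h2p0 : (0:ℝ) ≤ 2 ^ p := Real.rpow_nonneg (by norm_num) p
  have hK0 : 0 < K := by rw [hK]; nlinarith
  set D := M ^ p + E with hD
  have hD0 : 0 ≤ D := by rw [hD]; have := Real.rpow_nonneg hM0 p; linarith
  -- STEP 4 : eventual lower bound for cn
  have step4 : ∀ᶠ n in atTop, -(ε/2) ≤ p * cn n := by
    rcases eq_or_ne U 0 with hU0 | hU0
    · apply Filter.Eventually.of_forall
      intro n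
      have hzero : cn n = 0 := by
        have hU0' : (U : Ω → ℝ) =ᵐ[μ] 0 := by rw [hU0]; exact Lp.coeFn_zero ℝ _ μ
        rw [hcn]; simp only []
        rw [show (0:ℝ) = ∫ (_ : Ω), (0:ℝ) ∂μ by rw [integral_zero]]
        apply integral_congr_ae
        filter_upwards [hU0'] with a ha
        rw [ha]; simp
      rw [hzero]; simp; positivity
    · set t := min (1/2 : ℝ) (ε / (2 * (K * (D + E) + 1))) with ht
      have ht0 : 0 < t := lt_min (by norm_num) (by positivity)
      have ht1 : t ≤ 1 := le_trans (min_le_left _ _) (by norm_num)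
      have hy_ne : ((1:ℝ) - t) • U ≠ U := by
        intro heq
        apply hU0
        have h1 : U - ((1:ℝ)-t) • U = t • U := by rw [sub_smul, one_smul]; abel
        have h2 : t • U = 0 := by rw [← h1, heq, sub_self]
        rcases smul_eq_zero.mp h2 with h3 | h3
        · exact absurd h3 (ne_of_gt ht0)
        · exact h3
      obtain ⟨N, hN⟩ := hpolar (((1:ℝ) - t) • U) hy_ne
      rw [Filter.eventually_atTop]
      refine ⟨N, fun n hn => ?_⟩
      have hdist := hN n hn
      have hnorm : ‖h n‖ ≤ ‖h n + t • U‖ := by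
        have e1 : u n - ((1:ℝ)-t) • U = h n + t • U := by
          rw [hh]; simp only []; rw [sub_smul, one_smul]; abel
        have e0 : dist (u n) U = ‖h n‖ := by rw [hh]; exact dist_eq_norm _ _
        calc ‖h n‖ = dist (u n) U := e0.symm
          _ ≤ dist (u n) (((1:ℝ)-t) • U) := hdist.le
          _ = ‖h n + t • U‖ := by rw [dist_eq_norm, e1]
      have hIneq : ∫ a, |(h n : Ω → ℝ) a| ^ p ∂μ
          ≤ ∫ a, |(h n : Ω → ℝ) a + t * (U : Ω → ℝ) a| ^ p ∂μ := by
        have r1 : ∫ a, |(h n : Ω → ℝ) a| ^ p ∂μ = ‖h n‖ ^ p := integral_rpow_eq_norm hp0 (h n)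
        have r2 : ∫ a, |(h n : Ω → ℝ) a + t * (U : Ω → ℝ) a| ^ p ∂μ = ‖h n + t • U‖ ^ p := by
          rw [← integral_rpow_eq_norm hp0 (h n + t • U)]
          apply integral_congr_ae
          filter_upwards [Lp.coeFn_add (h n) (t • U), Lp.coeFn_smul t U] with a ha hb
          rw [ha]
          simp only [Pi.add_apply]
          rw [hb]
          simp
        rw [r1, r2]
        exact Real.rpow_le_rpow (norm_nonneg _) hnorm hp0.le
      -- integrability of the mixed term
      have hmix_meas : AEStronglyMeasurable
          (fun a => |(h n : Ω → ℝ) a| ^ (p-2) * ((U : Ω → ℝ) a) ^ (2:ℕ)) μ := by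
        have h1 := Lp.aestronglyMeasurable (h n)
        have h2 := Lp.aestronglyMeasurable U
        exact ((h1.norm.aemeasurable.pow_const (p-2)).mul
          (h2.aemeasurable.pow_const 2)).aestronglyMeasurable
      have hDn_int : Integrable
          (fun a => |(h n : Ω → ℝ) a| ^ (p-2) * ((U : Ω → ℝ) a) ^ (2:ℕ)) μ := by
        apply Integrable.mono' ((hhint n).add hUint) hmix_meas
        apply Filter.Eventually.of_forall
        intro a
        rw [Real.norm_eq_abs, abs_of_nonneg (by positivity)]
        exact L3 hp _ _
      set Dn := ∫ a, |(h n : Ω → ℝ) a| ^ (p-2) * ((U : Ω → ℝ) a) ^ (2:ℕ) ∂μ with hDn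
      have hDnD : Dn ≤ D := by
        rw [hDn, hD]
        calc ∫ a, |(h n : Ω → ℝ) a| ^ (p-2) * ((U : Ω → ℝ) a) ^ (2:ℕ) ∂μ
            ≤ ∫ a, (|(h n : Ω → ℝ) a| ^ p + |(U : Ω → ℝ) a| ^ p) ∂μ :=
              integral_mono hDn_int ((hhint n).add hUint) (fun a => L3 hp _ _)
          _ = ‖h n‖ ^ p + E := by
              rw [integral_add (hhint n) hUint, integral_rpow_eq_norm hp0, hE]
          _ ≤ M ^ p + E := by
              have := Real.rpow_le_rpow (norm_nonneg (h n)) (hMb n) hp0.le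
              linarith
      have hDn0 : 0 ≤ Dn := integral_nonneg fun a => by positivity
      have point2 : (fun a => |(h n : Ω → ℝ) a + t * (U : Ω → ℝ) a| ^ p) ≤ᵐ[μ]
          (fun a => |(h n : Ω → ℝ) a| ^ p + (p * t) * (W n a * (U : Ω → ℝ) a)
            + (K * t ^ (2:ℕ)) * (|(h n : Ω → ℝ) a| ^ (p-2) * ((U : Ω → ℝ) a) ^ (2:ℕ))
            + (K * t ^ p) * |(U : Ω → ℝ) a| ^ p) := by
        apply Filter.Eventually.of_forall
        intro a
        have hP2 := P2 hp ((h n : Ω → ℝ) a) (t * (U : Ω → ℝ) a)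
        have e1 : |t * (U : Ω → ℝ) a| ^ p = t ^ p * |(U : Ω → ℝ) a| ^ p := by
          rw [abs_mul, abs_of_nonneg ht0.le, Real.mul_rpow ht0.le (abs_nonneg _)]
        have e2 : p * (|(h n : Ω → ℝ) a| ^ (p-2) * (h n : Ω → ℝ) a * (t * (U : Ω → ℝ) a))
            = (p * t) * (W n a * (U : Ω → ℝ) a) := by
          rw [hW]; simp only []; ring
        have e3 : (|(h n : Ω → ℝ) a| ^ (p-2) * (t * (U : Ω → ℝ) a) ^ (2:ℕ))
            = t ^ (2:ℕ) * (|(h n : Ω → ℝ) a| ^ (p-2) * ((U : Ω → ℝ) a) ^ (2:ℕ)) := by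
          ring
        rw [e1, e2, e3] at hP2
        rw [hK]
        simp only []
        linarith
      have lhs_int : Integrable
          (fun a => |(h n : Ω → ℝ) a + t * (U : Ω → ℝ) a| ^ p) μ := by
        apply (integrable_rpow hp0 (h n + t • U)).congr
        filter_upwards [Lp.coeFn_add (h n) (t • U), Lp.coeFn_smul t U] with a ha hb
        rw [ha]
        simp only [Pi.add_apply]
        rw [hb]
        simp
      have j2 : Integrable (fun a => (p * t) * (W n a * (U : Ω → ℝ) a)) μ :=
        (hWU n).const_mul (p*t)
      have j3 : Integrable (fun a =>
          (K * t ^ (2:ℕ)) * (|(h n : Ω → ℝ) a| ^ (p-2) * ((U : Ω → ℝ) a) ^ (2:ℕ))) μ :=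
        hDn_int.const_mul (K * t ^ (2:ℕ))
      have j4 : Integrable (fun a => (K * t ^ p) * |(U : Ω → ℝ) a| ^ p) μ :=
        hUint.const_mul (K * t ^ p)
      have j12 : Integrable (fun a => |(h n : Ω → ℝ) a| ^ p
          + (p * t) * (W n a * (U : Ω → ℝ) a)) μ := (hhint n).add j2
      have j123 : Integrable (fun a => |(h n : Ω → ℝ) a| ^ p
          + (p * t) * (W n a * (U : Ω → ℝ) a)
          + (K * t ^ (2:ℕ)) * (|(h n : Ω → ℝ) a| ^ (p-2) * ((U : Ω → ℝ) a) ^ (2:ℕ))) μ :=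
        j12.add j3
      have rhs_int2 : Integrable (fun a => |(h n : Ω → ℝ) a| ^ p
          + (p * t) * (W n a * (U : Ω → ℝ) a)
          + (K * t ^ (2:ℕ)) * (|(h n : Ω → ℝ) a| ^ (p-2) * ((U : Ω → ℝ) a) ^ (2:ℕ))
          + (K * t ^ p) * |(U : Ω → ℝ) a| ^ p) μ := j123.add j4
      have int2 := integral_mono_ae lhs_int rhs_int2 point2
      rw [integral_add j123 j4, integral_add j12 j3, integral_add (hhint n) j2,
        integral_const_mul, integral_const_mul, integral_const_mul] at int2
      have key : 0 ≤ (p * t) * cn n + (K * t ^ (2:ℕ)) * Dn + (K * t ^ p) * E := by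
        rw [hcn, hDn, hE]
        simp only []
        linarith [hIneq, int2]
      have key2 : 0 ≤ p * cn n + (K * t) * Dn + (K * t ^ (p-1)) * E := by
        have expand_t : (p * t) * cn n + (K * t ^ (2:ℕ)) * Dn + (K * t ^ p) * E
            = t * (p * cn n + (K * t) * Dn + (K * t ^ (p-1)) * E) := by
          rw [← pm1_mul_eq hp ht0.le]
          ring
        rw [expand_t] at key
        exact le_of_not_gt fun hX => absurd key
          (not_le.mpr (mul_neg_of_pos_of_neg ht0 hX))
      have ht_p1 : t ^ (p-1) ≤ t := by
        calc t ^ (p-1) ≤ t ^ (1:ℝ) :=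
              Real.rpow_le_rpow_of_exponent_ge ht0 ht1 (by linarith)
          _ = t := Real.rpow_one t
      have b1 : (K * t) * Dn ≤ (K * t) * D :=
        mul_le_mul_of_nonneg_left hDnD (by positivity)
      have b2 : (K * t ^ (p-1)) * E ≤ (K * t) * E :=
        mul_le_mul_of_nonneg_right (mul_le_mul_of_nonneg_left ht_p1 hK0.le) hE0
      have b3 : t ≤ ε / (2 * (K * (D + E) + 1)) := min_le_right _ _
      have b4 : t * (K * (D + E)) ≤ ε / 2 := by
        have hpos : (0:ℝ) < 2 * (K * (D + E) + 1) := by positivity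
        have hX : (ε / (2 * (K * (D + E) + 1))) * (2 * (K * (D + E) + 1)) = ε :=
          div_mul_cancel₀ ε (ne_of_gt hpos)
        have hKDE : 0 ≤ K * (D + E) := by positivity
        nlinarith [mul_le_mul_of_nonneg_right b3 hKDE]
      have b5 : (K * t) * D + (K * t) * E ≤ ε / 2 := by
        have expand2 : (K * t) * D + (K * t) * E = t * (K * (D + E)) := by ring
        linarith [b4]
      clear_value t K D Dn E cn
      linarith only [key2, b1, b2, b5]
  -- STEP 5 : combine
  have step2' : ∀ᶠ n in atTop, -(ε/2) ≤ p * bn n := by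
    have hconv : Tendsto (fun n => p * bn n) atTop (nhds 0) := by
      have := step2.const_mul p
      rwa [mul_zero] at this
    have := hconv.eventually (eventually_gt_nhds (show -(ε/2) < 0 by linarith))
    filter_upwards [this] with n hn
    linarith
  filter_upwards [step2', step4] with n h2 h4
  have h1 := step1 n
  linarith
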